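/- Let f : Y → U be a covering map of topological spaces, and let σ_U : U → U and σ_Y : Y → Y be continuous involutions with f ∘ σ_Y = σ_U ∘ f. Let p, q ∈ U satisfy σ_U(p) = p and σ_U(q) = q, and let γ : [0,1] → U be a path from q to p. Let ω : [0,1] → U be the concatenated loop (σ_U ∘ γ) ∗ γ⁻¹ based at p, where γ⁻¹ is the reverse path. Fix y ∈ Y with f(y) = q. Suppose γ̃, η̃, ω̃ : [0,1] → Y are continuous maps such that: f ∘ γ̃ = γ and γ̃(0) = y; f ∘ η̃ = γ and η̃(0) = σ_Y(y); f ∘ ω̃ = ω and ω̃(0) = η̃(1). Then ω̃(1) = σ_Y(γ̃(1)). In other words, transporting y along γ and then applying σ_Y gives the same result as applying σ_Y, transporting along γ, and then transporting along the monodromy loop ω. -/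
import Mathlib


/-- Change of base point for a covering with compatible involutions: if γ is a
path from q to p between fixed points of σ_U, ω = (σ_U ∘ γ) ∗ γ⁻¹ the associated
monodromy loop at p, γ̃ the lift of γ starting at y, η̃ the lift of γ starting at
σ_Y(y), and ω̃ the lift of ω starting at η̃(1), then ω̃(1) = σ_Y(γ̃(1)). -/
theorem stmt3 {Y U : Type} [TopologicalSpace Y] [TopologicalSpace U]
    (f : Y → U) (hf : IsCoveringMap f)
    (σU : U → U) (hσUc : Continuous σU) (hσU : Function.Involutive σU)
    (σY : Y → Y) (hσYc : Continuous σY) (hσY : Function.Involutive σY)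
    (hfσ : ∀ y, f (σY y) = σU (f y))
    {p q : U} (hp : σU p = p) (hq : σU q = q)
    (γ : Path q p) (y : Y) (hy : f y = q)
    (γt ηt ωt : unitInterval → Y)
    (hγc : Continuous γt) (hηc : Continuous ηt) (hωc : Continuous ωt)
    (hγl : ∀ t, f (γt t) = γ t) (hγ0 : γt 0 = y)
    (hηl : ∀ t, f (ηt t) = γ t) (hη0 : ηt 0 = σY y)
    (hωl : ∀ t, f (ωt t) = (γ.symm.trans ((γ.map hσUc).cast hq.symm hp.symm)) t)
    (hω0 : ωt 0 = ηt 1) :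
    ωt 1 = σY (γt 1) := by
  classical
  let ηp : Path (σY y) (ηt 1) := ⟨⟨ηt, hηc⟩, hη0, rfl⟩
  let Qp : Path (σY y) (σY (γt 1)) := ⟨⟨σY ∘ γt, hσYc.comp hγc⟩, by simp [hγ0], rfl⟩
  let ψ : Path (ηt 1) (σY (γt 1)) := ηp.symm.trans Qp
  have key : ωt = (ψ : unitInterval → Y) := by
    apply hf.eq_of_comp_eq hωc ψ.continuous
    · funext t
      show f (ωt t) = f (ψ t)
      rw [hωl, Path.trans_apply, Path.trans_apply]
      split_ifs with h
      · show _ = f (ηp.symm _)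
        rw [Path.symm_apply, Path.symm_apply]
        show γ _ = f (ηt _)
        rw [hηl]
      · show _ = f (Qp _)
        show ((γ.map hσUc).cast hq.symm hp.symm) _ = f (σY (γt _))
        rw [hfσ, hγl]
        simp
    · show ωt 0 = ψ 0
      rw [hω0]
      show _ = (ηp.symm.trans Qp) 0
      simp [ηp]
  have h1 := congrFun key 1
  simpa using h1
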